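/- Let n, k be integers with n > 0, d = gcd(n, k), and let R = ℤ[ZMod n] with a = g^k. Consider the ℤ-linear map φ : R × R → R × R, φ(x, y) = (x − a·y, x − y). Then both the kernel of φ and the cokernel of φ are free abelian groups of rank d. -/

import Mathlib

namespace Stmt17

variable (n : ℕ) (k : ℤ)

abbrev R := MonoidAlgebra ℤ (Multiplicative (ZMod n))

noncomputable def a : R n := MonoidAlgebra.single (Multiplicative.ofAdd ((k : ZMod n))) 1

noncomputable def L : R n →ₗ[ℤ] R n := LinearMap.id - LinearMap.mulLeft ℤ (a n k)

abbrev Q := ZMod n ⧸ AddSubgroup.zmultiples ((k : ZMod n))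

def qf : Multiplicative (ZMod n) → Q n k := fun g => ↑(Multiplicative.toAdd g)

noncomputable def σ : R n →ₗ[ℤ] (Q n k →₀ ℤ) := Finsupp.lmapDomain ℤ ℤ (qf n k) ∘ₗ (MonoidAlgebra.coeffLinearEquiv ℤ).toLinearMap

theorem L_apply (f : R n) : L n k f = f - a n k * f := by
  simp [L, LinearMap.mulLeft_apply]

theorem L_single (x : Multiplicative (ZMod n)) (c : ℤ) :
    L n k (MonoidAlgebra.single x c)
      = MonoidAlgebra.single x c
        - MonoidAlgebra.single (Multiplicative.ofAdd ((k : ZMod n)) * x) c := by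
  simp [L, a, MonoidAlgebra.single_mul_single]

theorem σ_single (x : Multiplicative (ZMod n)) (c : ℤ) :
    σ n k (MonoidAlgebra.single x c) = Finsupp.single (qf n k x) c := by
  show Finsupp.mapDomain (qf n k) (Finsupp.single x c) = _
  rw [Finsupp.mapDomain_single]

theorem qf_mul (x : Multiplicative (ZMod n)) :
    qf n k (Multiplicative.ofAdd ((k : ZMod n)) * x) = qf n k x := by
  unfold qf
  rw [QuotientAddGroup.eq]
  have h : -(Multiplicative.toAdd (Multiplicative.ofAdd ((k : ZMod n)) * x))
      + Multiplicative.toAdd x = -((k : ZMod n)) := by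
    rw [toAdd_mul, toAdd_ofAdd]; abel
  rw [h]
  exact neg_mem (AddSubgroup.mem_zmultiples _)

theorem σ_comp_L : (σ n k).comp (L n k) = 0 := by
  apply MonoidAlgebra.lhom_ext'
  intro x
  apply LinearMap.ext
  intro c
  simp [LinearMap.comp_apply, L_single, map_sub, σ_single, qf_mul]

theorem single_sub_mem_range (x : ZMod n) (j : ℤ) :
    (MonoidAlgebra.single (Multiplicative.ofAdd x) (1:ℤ)
      - MonoidAlgebra.single (Multiplicative.ofAdd (x + j • ((k : ZMod n)))) 1 : R n)
      ∈ LinearMap.range (L n k) := by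
  induction j using Int.induction_on with
  | zero => simp
  | succ i ih =>
      have key : (MonoidAlgebra.single (Multiplicative.ofAdd x) (1:ℤ)
          - MonoidAlgebra.single (Multiplicative.ofAdd (x + ((i:ℤ)+1) • ((k : ZMod n)))) 1 : R n)
        = (MonoidAlgebra.single (Multiplicative.ofAdd x) 1
          - MonoidAlgebra.single (Multiplicative.ofAdd (x + (i:ℤ) • ((k : ZMod n)))) 1)
          + L n k (MonoidAlgebra.single (Multiplicative.ofAdd (x + (i:ℤ) • ((k : ZMod n)))) 1) := by
        rw [L_single]
        have h2 : Multiplicative.ofAdd ((k : ZMod n))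
            * Multiplicative.ofAdd (x + (i:ℤ) • ((k : ZMod n)))
            = Multiplicative.ofAdd (x + ((i:ℤ)+1) • ((k : ZMod n))) := by
          rw [← ofAdd_add]
          congr 1
          rw [add_smul, one_smul]
          abel
        rw [h2]
        abel
      rw [key]
      exact add_mem ih (LinearMap.mem_range_self _ _)
  | pred i ih =>
      have key : (MonoidAlgebra.single (Multiplicative.ofAdd x) (1:ℤ)
          - MonoidAlgebra.single (Multiplicative.ofAdd (x + (-(i:ℤ)-1) • ((k : ZMod n)))) 1 : R n)
        = (MonoidAlgebra.single (Multiplicative.ofAdd x) 1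
          - MonoidAlgebra.single (Multiplicative.ofAdd (x + (-(i:ℤ)) • ((k : ZMod n)))) 1)
          - L n k (MonoidAlgebra.single (Multiplicative.ofAdd (x + (-(i:ℤ)-1) • ((k : ZMod n)))) 1) := by
        rw [L_single]
        have h2 : Multiplicative.ofAdd ((k : ZMod n))
            * Multiplicative.ofAdd (x + (-(i:ℤ)-1) • ((k : ZMod n)))
            = Multiplicative.ofAdd (x + (-(i:ℤ)) • ((k : ZMod n))) := by
          rw [← ofAdd_add]
          congr 1
          rw [sub_smul, one_smul]
          abel
        rw [h2]
        abel
      rw [key]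
      exact sub_mem ih (LinearMap.mem_range_self _ _)

theorem single_sub_mem_range' (x y : ZMod n) (h : (x : Q n k) = (y : Q n k)) (c : ℤ) :
    (MonoidAlgebra.single (Multiplicative.ofAdd x) c
      - MonoidAlgebra.single (Multiplicative.ofAdd y) c : R n)
      ∈ LinearMap.range (L n k) := by
  rw [QuotientAddGroup.eq] at h
  obtain ⟨j, hj⟩ := h
  simp only at hj
  have hy : y = x + j • ((k : ZMod n)) := by
    rw [hj]; abel
  subst hy
  have h1 := single_sub_mem_range n k x j
  have := Submodule.smul_mem (LinearMap.range (L n k)) c h1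
  rw [smul_sub] at this
  simpa [Finsupp.smul_single, smul_eq_mul, mul_one] using this

noncomputable def σbar : (R n ⧸ LinearMap.range (L n k)) →ₗ[ℤ] (Q n k →₀ ℤ) :=
  Submodule.liftQ _ (σ n k) (LinearMap.range_le_ker_iff.2 (σ_comp_L n k))

noncomputable def τ : (Q n k →₀ ℤ) →ₗ[ℤ] (R n ⧸ LinearMap.range (L n k)) :=
  Finsupp.lift _ ℤ _ (fun c => Submodule.Quotient.mk
    (MonoidAlgebra.single (Multiplicative.ofAdd (Quotient.out c)) 1))

theorem τ_single (c : Q n k) (b : ℤ) :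
    τ n k (Finsupp.single c b) = Submodule.Quotient.mk
      (MonoidAlgebra.single (Multiplicative.ofAdd (Quotient.out c)) b) := by
  simp [τ, Finsupp.lift_apply, Finsupp.sum_single_index]
  rw [← Submodule.Quotient.mk_smul]
  congr 1
  simp [Finsupp.smul_single]

noncomputable def cokerLEquiv : (R n ⧸ LinearMap.range (L n k)) ≃ₗ[ℤ] (Q n k →₀ ℤ) := by
  refine LinearEquiv.ofLinear (σbar n k) (τ n k) ?_ ?_
  · apply Finsupp.lhom_ext
    intro c b
    rw [LinearMap.comp_apply, τ_single, LinearMap.id_apply]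
    show σ n k _ = _
    rw [σ_single]
    congr 1
    show ((Quotient.out c : ZMod n) : Q n k) = c
    exact QuotientAddGroup.out_eq' c
  · apply Submodule.linearMap_qext
    apply MonoidAlgebra.lhom_ext'
    intro x
    apply LinearMap.ext
    intro b
    simp only [LinearMap.comp_apply, MonoidAlgebra.lsingle_apply, Submodule.mkQ_apply]
    have h1 : σbar n k (Submodule.Quotient.mk (MonoidAlgebra.single x b)) = σ n k (MonoidAlgebra.single x b) := rfl
    rw [h1, σ_single, τ_single, LinearMap.id_apply]
    rw [Submodule.Quotient.eq]
    have hx : x = Multiplicative.ofAdd (Multiplicative.toAdd x) := rfl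
    have h2 : ((Quotient.out (qf n k x) : ZMod n) : Q n k) = ((Multiplicative.toAdd x : ZMod n) : Q n k) :=
      QuotientAddGroup.out_eq' _
    exact single_sub_mem_range' n k _ _ h2 b

theorem invariant_step (f : R n) (hf : a n k * f = f) (z : ZMod n) :
    f.coeff (Multiplicative.ofAdd z) = f.coeff (Multiplicative.ofAdd (z + (k : ZMod n))) := by
  have h := congrArg (fun u : R n => u.coeff (Multiplicative.ofAdd (z + (k : ZMod n)))) hf
  simp only [a, MonoidAlgebra.coeff_single_mul_apply] at h
  rw [one_mul] at h
  have e : (Multiplicative.ofAdd ((k:ZMod n)))⁻¹ * Multiplicative.ofAdd (z + (k : ZMod n))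
      = Multiplicative.ofAdd z := by
    rw [← ofAdd_neg, ← ofAdd_add]
    congr 1
    abel
  rw [e] at h
  exact h

theorem invariant_zsmul (f : R n) (hf : a n k * f = f) (x : ZMod n) (j : ℤ) :
    f.coeff (Multiplicative.ofAdd (x + j • (k : ZMod n))) = f.coeff (Multiplicative.ofAdd x) := by
  induction j using Int.induction_on with
  | zero => norm_num
  | succ i ih =>
      have e : x + ((i:ℤ)+1) • (k : ZMod n) = (x + (i:ℤ) • (k : ZMod n)) + (k : ZMod n) := by
        rw [add_smul, one_smul]; abel
      rw [e, ← invariant_step n k f hf, ih]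
  | pred i ih =>
      have e : x + (-(i:ℤ)) • (k : ZMod n) = (x + (-(i:ℤ)-1) • (k : ZMod n)) + (k : ZMod n) := by
        rw [sub_smul, one_smul]; abel
      rw [← ih, e, ← invariant_step n k f hf]

theorem invariant_of_coset (f : R n) (hf : a n k * f = f) (x y : ZMod n)
    (h : (x : Q n k) = (y : Q n k)) :
    f.coeff (Multiplicative.ofAdd x) = f.coeff (Multiplicative.ofAdd y) := by
  rw [QuotientAddGroup.eq] at h
  obtain ⟨j, hj⟩ := h
  simp only at hj
  have hy : y = x + j • ((k : ZMod n)) := by rw [hj]; abel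
  rw [hy, invariant_zsmul n k f hf]

theorem mem_ker_iff (f : R n) : f ∈ LinearMap.ker (L n k) ↔ a n k * f = f := by
  rw [LinearMap.mem_ker, L_apply, sub_eq_zero]
  exact eq_comm

variable [NeZero n]

noncomputable def kerA : LinearMap.ker (L n k) →ₗ[ℤ] (Q n k → ℤ) where
  toFun f := fun c => (f : R n).coeff (Multiplicative.ofAdd (Quotient.out c))
  map_add' f g := by funext c; rfl
  map_smul' m f := by funext c; rfl

noncomputable def kerEquiv : LinearMap.ker (L n k) ≃ₗ[ℤ] (Q n k → ℤ) :=
  { kerA n k with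
    invFun := fun h => ⟨MonoidAlgebra.ofCoeff (Finsupp.equivFunOnFinite.symm (fun g => h (qf n k g))), by
      rw [mem_ker_iff]
      apply MonoidAlgebra.ext
      apply Finsupp.ext
      intro y
      show (MonoidAlgebra.single (Multiplicative.ofAdd ((k : ZMod n))) (1:ℤ) * _).coeff y = _
      rw [MonoidAlgebra.coeff_single_mul_apply, one_mul]
      show h (qf n k _) = h (qf n k y)
      congr 1
      unfold qf
      rw [QuotientAddGroup.eq]
      refine ⟨1, ?_⟩
      simp⟩
    left_inv := by
      intro f
      apply Subtype.ext
      apply MonoidAlgebra.ext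
      apply Finsupp.ext
      intro y
      show (Finsupp.equivFunOnFinite.symm (fun g => kerA n k f (qf n k g)) : _ →₀ ℤ) y = (f : R n).coeff y
      rw [Finsupp.coe_equivFunOnFinite_symm]
      show (f : R n).coeff (Multiplicative.ofAdd (Quotient.out (qf n k y))) = (f : R n).coeff y
      have hf : a n k * (f : R n) = (f : R n) := (mem_ker_iff n k _).1 f.2
      exact invariant_of_coset n k (f : R n) hf _ _ (QuotientAddGroup.out_eq' _)
    right_inv := by
      intro h
      funext c
      show (Finsupp.equivFunOnFinite.symm (fun g => h (qf n k g)) : _ →₀ ℤ) (Multiplicative.ofAdd (Quotient.out c)) = h c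
      rw [Finsupp.coe_equivFunOnFinite_symm]
      congr 1
      exact QuotientAddGroup.out_eq' c }

theorem card_Q : Nat.card (Q n k) = Int.gcd n k := by
  have hn : n ≠ 0 := NeZero.ne n
  have h1 : Nat.card (ZMod n)
      = Nat.card (Q n k) * Nat.card (AddSubgroup.zmultiples ((k : ZMod n))) :=
    AddSubgroup.card_eq_card_quotient_mul_card_addSubgroup _
  rw [Nat.card_zmultiples, Nat.card_zmod] at h1
  have hg : Int.gcd (n : ℤ) k = n.gcd k.natAbs := by simp [Int.gcd]
  have hord : addOrderOf ((k : ZMod n) : ZMod n) = n / Int.gcd (n : ℤ) k := by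
    rw [hg]
    rcases Int.natAbs_eq k with hk | hk
    · rw [hk, Int.cast_natCast]
      exact ZMod.addOrderOf_coe _ hn
    · rw [hk, Int.cast_neg, Int.cast_natCast, addOrderOf_neg, Int.natAbs_neg,
        Int.natAbs_natCast]
      exact ZMod.addOrderOf_coe _ hn
  rw [hord] at h1
  have hd : Int.gcd (n : ℤ) k ∣ n := by rw [hg]; exact Nat.gcd_dvd_left _ _
  have hdvdpos : 0 < n / Int.gcd (n : ℤ) k := by
    apply Nat.div_pos (Nat.le_of_dvd (Nat.pos_of_ne_zero hn) hd)
    rcases Nat.eq_zero_or_pos (Int.gcd (n : ℤ) k) with h | h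
    · exfalso; rw [hg] at h; exact hn (Nat.eq_zero_of_gcd_eq_zero_left h)
    · exact h
  have : Nat.card (Q n k) = n / (n / Int.gcd (n : ℤ) k) :=
    (Nat.div_eq_of_eq_mul_left hdvdpos h1).symm
  rw [this, Nat.div_div_self hd hn]

end Stmt17

open Stmt17 in
/-- For `R = ℤ[ZMod n]`, `a = g^k`, and the ℤ-linear map
`φ(x,y) = (x - a·y, x - y)` on `R × R`, both `ker φ` and `coker φ` are free abelian
groups of rank `gcd n k`. -/
theorem stmt_17 (n : ℕ) (hn : 0 < n) (k : ℤ)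
    (φ : (MonoidAlgebra ℤ (Multiplicative (ZMod n)) ×
            MonoidAlgebra ℤ (Multiplicative (ZMod n))) →ₗ[ℤ]
         (MonoidAlgebra ℤ (Multiplicative (ZMod n)) ×
            MonoidAlgebra ℤ (Multiplicative (ZMod n))))
    (hφ : ∀ x y : MonoidAlgebra ℤ (Multiplicative (ZMod n)),
      φ (x, y) = (x - MonoidAlgebra.of ℤ (Multiplicative (ZMod n))
          (Multiplicative.ofAdd ((k : ZMod n))) * y, x - y)) :
    Module.Free ℤ (LinearMap.ker φ) ∧
    Module.finrank ℤ (LinearMap.ker φ) = Int.gcd (n : ℤ) k ∧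
    Module.Free ℤ ((MonoidAlgebra ℤ (Multiplicative (ZMod n)) ×
        MonoidAlgebra ℤ (Multiplicative (ZMod n))) ⧸ LinearMap.range φ) ∧
    Module.finrank ℤ ((MonoidAlgebra ℤ (Multiplicative (ZMod n)) ×
        MonoidAlgebra ℤ (Multiplicative (ZMod n))) ⧸ LinearMap.range φ)
      = Int.gcd (n : ℤ) k := by
  classical
  haveI : NeZero n := ⟨hn.ne'⟩
  have ha : MonoidAlgebra.of ℤ (Multiplicative (ZMod n))
      (Multiplicative.ofAdd ((k : ZMod n))) = Stmt17.a n k := rfl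
  rw [ha] at hφ
  -- the kernel
  have hcomp : ∀ p : R n × R n, p ∈ LinearMap.ker φ →
      p.1 - a n k * p.2 = 0 ∧ p.1 - p.2 = 0 := by
    intro p hp
    rw [LinearMap.mem_ker] at hp
    have h := hφ p.1 p.2
    rw [Prod.mk.eta, hp] at h
    exact ⟨congrArg Prod.fst h.symm, congrArg Prod.snd h.symm⟩
  let e1 : LinearMap.ker φ ≃ₗ[ℤ] LinearMap.ker (L n k) :=
    { toFun := fun p => ⟨p.1.2, by
        obtain ⟨h1, h2⟩ := hcomp p.1 p.2
        rw [LinearMap.mem_ker, Stmt17.L_apply]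
        rw [sub_eq_zero] at h2
        rw [h2] at h1
        exact h1⟩
      map_add' := fun p q => rfl
      map_smul' := fun m p => rfl
      invFun := fun z => ⟨(z.1, z.1), by
        have hz := z.2
        rw [LinearMap.mem_ker, Stmt17.L_apply] at hz
        rw [LinearMap.mem_ker, hφ, hz, sub_self]
        rfl⟩
      left_inv := by
        intro p
        apply Subtype.ext
        obtain ⟨h1, h2⟩ := hcomp p.1 p.2
        rw [sub_eq_zero] at h2
        exact Prod.ext h2.symm rfl
      right_inv := fun z => rfl }
  let E := e1.trans (kerEquiv n k)
  haveI : Fintype (Q n k) := Fintype.ofFinite _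
  have hfree1 : Module.Free ℤ (LinearMap.ker φ) := Module.Free.of_equiv E.symm
  have hrank1 : Module.finrank ℤ (LinearMap.ker φ) = Int.gcd (n : ℤ) k := by
    rw [E.finrank_eq, Module.finrank_fintype_fun_eq_card, ← Nat.card_eq_fintype_card,
      card_Q n k]
  -- the cokernel
  let π : (R n × R n) →ₗ[ℤ] (R n ⧸ LinearMap.range (L n k)) :=
    (Submodule.mkQ _).comp ((LinearMap.fst ℤ (R n) (R n)) - (LinearMap.snd ℤ (R n) (R n)))
  have hπ : ∀ p : R n × R n, π p = Submodule.Quotient.mk (p.1 - p.2) := fun p => rfl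
  have hker : LinearMap.ker π = LinearMap.range φ := by
    ext p
    rw [LinearMap.mem_ker, hπ, Submodule.Quotient.mk_eq_zero]
    constructor
    · rintro ⟨y, hy⟩
      refine ⟨(p.2 + y, y), ?_⟩
      rw [hφ]
      rw [Stmt17.L_apply] at hy
      have h1 : p.2 + y - a n k * y = p.1 := by linear_combination hy
      have h2 : p.2 + y - y = p.2 := by abel
      rw [h1, h2]
    · rintro ⟨⟨x, y⟩, rfl⟩
      rw [hφ]
      refine ⟨y, ?_⟩
      rw [Stmt17.L_apply]
      show y - a n k * y = (x - a n k * y) - (x - y)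
      abel
  have hsurj : Function.Surjective π := by
    intro w
    obtain ⟨u, rfl⟩ := Submodule.mkQ_surjective _ w
    exact ⟨(u, 0), by rw [hπ]; simp⟩
  let e2 := ((Submodule.quotEquivOfEq _ _ hker.symm).trans
    (π.quotKerEquivOfSurjective hsurj)).trans (cokerLEquiv n k)
  have hfree2 : Module.Free ℤ ((R n × R n) ⧸ LinearMap.range φ) :=
    Module.Free.of_equiv e2.symm
  have hrank2 : Module.finrank ℤ ((R n × R n) ⧸ LinearMap.range φ) = Int.gcd (n : ℤ) k := by
    rw [e2.finrank_eq, Module.finrank_finsupp_self, ← Nat.card_eq_fintype_card, card_Q n k]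
  exact ⟨hfree1, hrank1, hfree2, hrank2⟩
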